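/- The derived subalgebra [K_0, K_0] has codimension one in K_0; equivalently, it equals the kernel of the functional φ defined by φ(K_n) = n. -/

import Mathlib

/-- The derived subalgebra `[K₀, K₀]` (the span of all brackets) equals the kernel of the
functional `φ` with `φ (K n) = n`, and has codimension one. -/
theorem stmt2 (V : Type) [LieRing V] [LieAlgebra ℂ V] (K : ℤ → V)
    (hK0 : K 0 = 0)
    (hbr : ∀ m n : ℤ, m ≠ -n →
      ⁅K m, K n⁆ = ((m : ℂ) - n) • K (m + n) - (m : ℂ) • K m + (n : ℂ) • K n)
    (hbr' : ∀ m : ℤ, ⁅K m, K (-m)⁆ = -((m : ℂ) • K m) - (m : ℂ) • K (-m))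
    (b : Module.Basis {n : ℤ // n ≠ 0} ℂ V) (hb : ∀ n : {n : ℤ // n ≠ 0}, b n = K n.1)
    (φ : V →ₗ[ℂ] ℂ) (hφ : ∀ n : ℤ, φ (K n) = n) :
    Submodule.span ℂ {x : V | ∃ a b : V, x = ⁅a, b⁆} = LinearMap.ker φ ∧
    Module.rank ℂ (V ⧸ Submodule.span ℂ {x : V | ∃ a b : V, x = ⁅a, b⁆}) = 1 := by
  set S := Submodule.span ℂ {x : V | ∃ a b : V, x = ⁅a, b⁆} with hS
  have hbrS : ∀ a c : V, ⁅a, c⁆ ∈ S := fun a c => Submodule.subset_span ⟨a, c, rfl⟩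
  -- each K n - n • K 1 lies in S
  have he : ∀ n : ℤ, K n - (n : ℂ) • K 1 ∈ S := by
    intro n
    rcases eq_or_ne n 0 with rfl | h0
    · simpa [hK0] using S.zero_mem
    rcases eq_or_ne n 1 with rfl | h1
    · simpa using S.zero_mem
    rcases eq_or_ne n (-1) with rfl | hm1
    · have hC := hbr' 1
      have hkey : K (-1) - ((-1 : ℤ) : ℂ) • K 1 = -⁅K 1, K (-1)⁆ := by
        rw [hC]; push_cast; module
      rw [hkey]
      exact S.neg_mem (hbrS _ _)
    · have hA := hbr (n + 1) (-1) (by omega)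
      have hB := hbr n 1 (by omega)
      have hC := hbr' 1
      have h1 : n + 1 + -1 = n := by ring
      rw [h1] at hA
      have key : K n - (n : ℂ) • K 1 =
          (-((n : ℂ) - 1) / 2) • ⁅K (n + 1), K (-1)⁆ +
            (-((n : ℂ) + 1) / 2) • ⁅K n, K 1⁆ +
            (((n : ℂ) - 1) / 2) • ⁅K 1, K (-1)⁆ := by
        rw [hA, hB, hC]
        push_cast
        match_scalars <;> ring
      rw [key]
      exact S.add_mem (S.add_mem (S.smul_mem _ (hbrS _ _)) (S.smul_mem _ (hbrS _ _)))
        (S.smul_mem _ (hbrS _ _))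
  -- φ vanishes on all brackets
  have hφbr : ∀ a c : V, φ ⁅a, c⁆ = 0 := by
    let M : V →ₗ[ℂ] V →ₗ[ℂ] ℂ := LinearMap.mk₂ ℂ (fun a c => φ ⁅a, c⁆)
      (fun x y z => by simp [add_lie])
      (fun r x y => by simp [smul_lie])
      (fun x y z => by simp [lie_add])
      (fun r x y => by simp [lie_smul])
    have hM : M = 0 := by
      apply b.ext; intro i; apply b.ext; intro j
      have : M (b i) (b j) = φ ⁅K i.1, K j.1⁆ := by rw [hb, hb]; rfl
      rw [this]
      rcases eq_or_ne j.1 (-i.1) with h | h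
      · rw [h, hbr' i.1]
        simp [map_sub, map_smul, map_neg, hφ]
      · rw [hbr i.1 j.1 (by omega)]
        simp [map_sub, map_add, map_smul, hφ]
        push_cast
        ring
    intro a c
    have := LinearMap.congr_fun (LinearMap.congr_fun hM a) c
    simpa [M] using this
  have hle : S ≤ LinearMap.ker φ := by
    rw [hS, Submodule.span_le]
    rintro x ⟨a, c, rfl⟩
    exact LinearMap.mem_ker.2 (hφbr a c)
  -- S together with K 1 spans everything
  have htop : S ⊔ Submodule.span ℂ {K 1} = ⊤ := by
    rw [eq_top_iff, ← b.span_eq, Submodule.span_le]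
    rintro x ⟨i, rfl⟩
    rw [hb]
    have hmem : (K i.1 - (i.1 : ℂ) • K 1) + (i.1 : ℂ) • K 1 ∈ S ⊔ Submodule.span ℂ {K 1} :=
      Submodule.add_mem _ (Submodule.mem_sup_left (he i.1))
        (Submodule.mem_sup_right (Submodule.smul_mem _ _ (Submodule.mem_span_singleton_self _)))
    simpa using hmem
  have hker : LinearMap.ker φ ≤ S := by
    intro x hx
    have hxtop : x ∈ S ⊔ Submodule.span ℂ {K 1} := htop ▸ Submodule.mem_top
    rcases Submodule.mem_sup.1 hxtop with ⟨s, hs, y, hy, rfl⟩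
    rcases Submodule.mem_span_singleton.1 hy with ⟨c, rfl⟩
    have h1 : φ s = 0 := hle hs
    have h2 : φ (s + c • K 1) = 0 := hx
    have hc : c = 0 := by
      simp [map_add, map_smul, h1, hφ] at h2
      simpa using h2
    simpa [hc] using hs
  have hSeq : S = LinearMap.ker φ := le_antisymm hle hker
  refine ⟨hSeq, ?_⟩
  rw [hSeq]
  have hsurj : Function.Surjective φ := fun c => ⟨c • K 1, by simp [hφ]⟩
  rw [(φ.quotKerEquivOfSurjective hsurj).rank_eq, Module.rank_self ℂ]
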